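/- Let u > 0 be real. Then the function g(t) = Γ(u−t)·Γ(u+t) is strictly increasing on the interval [0, u). -/

import Mathlib

open Real Set

lemma strictConvexOn_log_Gamma' : StrictConvexOn ℝ (Ioi 0) (fun x => Real.log (Real.Gamma x)) := by
  have h1 : ConvexOn ℝ (Ioi 0) (fun x : ℝ => Real.log (Real.Gamma (1 + x))) := by
    have h := (Real.convexOn_log_Gamma.translate_right (1 : ℝ)).subset
      (fun x (hx : x ∈ Ioi (0:ℝ)) => by
        simp only [Set.mem_preimage, Set.mem_Ioi] at *
        linarith) (convex_Ioi 0)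
    exact h
  have h2 : StrictConvexOn ℝ (Ioi 0)
      (fun x : ℝ => Real.log (Real.Gamma (1 + x)) + (- Real.log x)) :=
    h1.add_strictConvexOn strictConcaveOn_log_Ioi.neg
  have heq : ∀ x ∈ Ioi (0:ℝ),
      Real.log (Real.Gamma (1 + x)) + (- Real.log x) = Real.log (Real.Gamma x) := by
    intro x hx
    rw [add_comm (1:ℝ), Real.Gamma_add_one (ne_of_gt hx),
      Real.log_mul (ne_of_gt hx) (Real.Gamma_pos_of_pos hx).ne']
    ring
  refine ⟨h2.1, fun x hx y hy hxy a b ha hb hab => ?_⟩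
  have hm : a • x + b • y ∈ Ioi (0:ℝ) := convex_Ioi 0 hx hy ha.le hb.le hab
  have hm' : a * x + b * y ∈ Ioi (0:ℝ) := by simpa using hm
  have := h2.2 hx hy hxy ha hb hab
  simp only [smul_eq_mul] at this ⊢
  rw [heq _ hm', heq _ hx, heq _ hy] at this
  exact this

theorem gamma_product_strictMonoOn (u : ℝ) (hu : 0 < u) :
    StrictMonoOn (fun t : ℝ => Real.Gamma (u - t) * Real.Gamma (u + t)) (Set.Ico 0 u) := by
  intro s hs t ht hst
  obtain ⟨hs0, hsu⟩ := hs
  obtain ⟨ht0, htu⟩ := ht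
  have ht0' : 0 < t := lt_of_le_of_lt hs0 hst
  set A := u - t with hA
  set B := u - s with hB
  set C := u + s with hC
  set D := u + t with hD
  have hApos : (0:ℝ) < A := by simp [hA]; linarith
  have hBpos : (0:ℝ) < B := by simp [hB]; linarith
  have hCpos : (0:ℝ) < C := by simp [hC]; linarith
  have hDpos : (0:ℝ) < D := by simp [hD]; linarith
  have hAD : A ≠ D := by simp [hA, hD]; intro h; linarith
  set lam := (t + s) / (2 * t) with hlam
  have hlam0 : 0 < lam := by positivity
  have hlam1 : lam < 1 := by
    rw [hlam, div_lt_one (by positivity)]; linarith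
  have hcomb1 : lam * A + (1 - lam) * D = B := by
    simp only [hlam, hA, hB, hD]
    field_simp
    ring
  have hcomb2 : (1 - lam) * A + lam * D = C := by
    simp only [hlam, hA, hC, hD]
    field_simp
    ring
  have h1 : Real.log (Real.Gamma B) <
      lam * Real.log (Real.Gamma A) + (1 - lam) * Real.log (Real.Gamma D) := by
    have := strictConvexOn_log_Gamma'.2 (Set.mem_Ioi.mpr hApos) (Set.mem_Ioi.mpr hDpos)
      hAD hlam0 (by linarith : (0:ℝ) < 1 - lam) (by ring)
    simp only [smul_eq_mul] at this
    rwa [hcomb1] at this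
  have h2 : Real.log (Real.Gamma C) <
      (1 - lam) * Real.log (Real.Gamma A) + lam * Real.log (Real.Gamma D) := by
    have := strictConvexOn_log_Gamma'.2 (Set.mem_Ioi.mpr hApos) (Set.mem_Ioi.mpr hDpos)
      hAD (by linarith : (0:ℝ) < 1 - lam) hlam0 (by ring)
    simp only [smul_eq_mul] at this
    rwa [hcomb2] at this
  have key : Real.log (Real.Gamma B) + Real.log (Real.Gamma C)
      < Real.log (Real.Gamma A) + Real.log (Real.Gamma D) := by linarith
  have hBC : (0:ℝ) < Real.Gamma B * Real.Gamma C :=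
    mul_pos (Real.Gamma_pos_of_pos hBpos) (Real.Gamma_pos_of_pos hCpos)
  have hADpos : (0:ℝ) < Real.Gamma A * Real.Gamma D :=
    mul_pos (Real.Gamma_pos_of_pos hApos) (Real.Gamma_pos_of_pos hDpos)
  have : Real.log (Real.Gamma B * Real.Gamma C) < Real.log (Real.Gamma A * Real.Gamma D) := by
    rw [Real.log_mul (Real.Gamma_pos_of_pos hBpos).ne' (Real.Gamma_pos_of_pos hCpos).ne',
      Real.log_mul (Real.Gamma_pos_of_pos hApos).ne' (Real.Gamma_pos_of_pos hDpos).ne']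
    exact key
  show Real.Gamma B * Real.Gamma C < Real.Gamma A * Real.Gamma D
  exact (Real.log_lt_log_iff hBC hADpos).mp this
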